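/- Let S be a subring of a commutative ring R and I an ideal of S, and define Int_k := {g ∈ R[x] : g(C) ∈ T_k(I) for all C ∈ T_k(S)}. Then Int_m ⊆ Int_k whenever m ≥ k. -/
import Mathlib


/-- With `Int_k := {g ∈ R[x] : g(C) ∈ T_k(I) for all C ∈ T_k(S)}`, we have
`Int_m ⊆ Int_k` whenever `m ≥ k`. -/
theorem stmt11 (R : Type*) [CommRing R] (S : Subring R) (I : Ideal S)
    (m k : ℕ) (hkm : k ≤ m) (g : Polynomial R)
    (hg : ∀ C : Matrix (Fin m) (Fin m) R, C.BlockTriangular id → (∀ a b, C a b ∈ S) →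
        (Polynomial.aeval C g).BlockTriangular id ∧
          ∀ a b : Fin m, ∃ s ∈ I, (s : R) = (Polynomial.aeval C g) a b) :
    ∀ C : Matrix (Fin k) (Fin k) R, C.BlockTriangular id → (∀ a b, C a b ∈ S) →
        (Polynomial.aeval C g).BlockTriangular id ∧
          ∀ a b : Fin k, ∃ s ∈ I, (s : R) = (Polynomial.aeval C g) a b := by
  intro C hCt hCS
  set f : Fin k → Fin m := Fin.castLE hkm with hf
  have hfinj : Function.Injective f := Fin.castLE_injective hkm
  set D : Matrix (Fin m) (Fin m) R := fun i j =>
    if h : (i : ℕ) < k ∧ (j : ℕ) < k then C ⟨i, h.1⟩ ⟨j, h.2⟩ else 0 with hD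
  have hDf : ∀ a b : Fin k, D (f a) (f b) = C a b := by
    intro a b
    simp only [hD]
    rw [dif_pos ⟨a.isLt, b.isLt⟩]
    rfl
  have hDzero : ∀ (j : Fin m) (b : Fin k), k ≤ (j : ℕ) → D j (f b) = 0 := by
    intro j b hj
    simp only [hD]
    rw [dif_neg]
    intro h
    omega
  have hpow : ∀ (n : ℕ) (a b : Fin k), (D ^ n) (f a) (f b) = (C ^ n) a b := by
    intro n
    induction n with
    | zero =>
      intro a b
      simp [Matrix.one_apply, hfinj.eq_iff]
    | succ n ih =>
      intro a b
      rw [pow_succ, pow_succ, Matrix.mul_apply, Matrix.mul_apply]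
      rw [← Finset.sum_subset (Finset.subset_univ (Finset.image f Finset.univ))]
      · rw [Finset.sum_image (fun x _ y _ h => hfinj h)]
        exact Finset.sum_congr rfl fun c _ => by rw [ih a c, hDf c b]
      · intro j _ hj
        have hjk : k ≤ (j : ℕ) := by
          by_contra h
          push_neg at h
          exact hj (Finset.mem_image.mpr ⟨⟨j, h⟩, Finset.mem_univ _, rfl⟩)
        rw [hDzero j b hjk, mul_zero]
  have hval : ∀ a b : Fin k, (Polynomial.aeval D g) (f a) (f b) = (Polynomial.aeval C g) a b := by
    clear hg
    induction g using Polynomial.induction_on' with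
    | add p q hp hq =>
      intro a b
      simp only [map_add, Matrix.add_apply, hp a b, hq a b]
    | monomial n c =>
      intro a b
      rw [Polynomial.aeval_monomial, Polynomial.aeval_monomial,
        ← Algebra.smul_def, ← Algebra.smul_def, Matrix.smul_apply, Matrix.smul_apply, hpow]
  have hDt : D.BlockTriangular id := by
    intro i j hij
    simp only [hD]
    split
    · next h =>
      exact hCt (show (id (⟨(j : ℕ), h.2⟩ : Fin k)) < id ⟨(i : ℕ), h.1⟩ from hij)
    · rfl
  have hDS : ∀ a b, D a b ∈ S := by
    intro a b
    simp only [hD]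
    split
    · exact hCS _ _
    · exact S.zero_mem
  obtain ⟨hgt, hgI⟩ := hg D hDt hDS
  constructor
  · intro a b hab
    rw [← hval a b]
    exact hgt (show id (f b) < id (f a) from hab)
  · intro a b
    obtain ⟨s, hs, hsv⟩ := hgI (f a) (f b)
    exact ⟨s, hs, hsv.trans (hval a b)⟩
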